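/- Every finite connected simple graph G with χ(G) ≥ 4 has a spanning tree T such that BBC_2(G,T) = χ(G), and every spanning tree T' of G satisfies BBC_2(G,T') ≥ χ(G). -/

import Mathlib

/-- A proper `k`-coloring of `G`: colors are taken in `{1, …, k}` and adjacent
vertices receive different colors. -/
def IsProperColoring {V : Type*} (G : SimpleGraph V) (k : ℕ) (c : V → ℕ) : Prop :=
  (∀ v : V, 1 ≤ c v ∧ c v ≤ k) ∧ ∀ ⦃u v : V⦄, G.Adj u v → c u ≠ c v

/-- The chromatic number of `G`: the least `k` such that `G` has a proper
`k`-coloring. -/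
noncomputable def chromNum {V : Type*} (G : SimpleGraph V) : ℕ :=
  sInf {k : ℕ | ∃ c : V → ℕ, IsProperColoring G k c}

/-- A `q`-backbone `k`-coloring of `(G, H)`: a proper `k`-coloring of `G` such
that the colors of the endpoints of every edge of `H` differ by at least `q`. -/
def IsBackboneColoring {V : Type*} (G H : SimpleGraph V) (q k : ℕ) (c : V → ℕ) : Prop :=
  IsProperColoring G k c ∧ ∀ ⦃u v : V⦄, H.Adj u v → (q : ℤ) ≤ |(c u : ℤ) - (c v : ℤ)|

/-- The `q`-backbone chromatic number `BBC_q(G, H)`: the least `k` for which a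
`q`-backbone `k`-coloring of `(G, H)` exists. -/
noncomputable def BBC {V : Type*} (G H : SimpleGraph V) (q : ℕ) : ℕ :=
  sInf {k : ℕ | ∃ c : V → ℕ, IsBackboneColoring G H q k c}

section Aux

set_option linter.unusedSectionVars false

open SimpleGraph

variable {V : Type*} [Fintype V]


lemma exists_spanning_tree_aux (n : ℕ) :
    ∀ (G : SimpleGraph V), G.edgeSet.ncard ≤ n → G.Connected →
      ∃ T : SimpleGraph V, T ≤ G ∧ T.IsTree := by
  induction n with
  | zero =>
    intro G hcard hG
    refine ⟨G, le_refl _, hG, ?_⟩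
    intro v p hp
    have h3 := hp.three_le_length
    cases p with
    | nil => simp at h3
    | cons h p =>
      have : s(v, _) ∈ G.edgeSet := h
      have hne : G.edgeSet.Nonempty := ⟨_, this⟩
      have := Set.ncard_pos (Set.toFinite _) |>.mpr hne
      omega
  | succ n ih =>
    intro G hcard hG
    by_cases hac : G.IsAcyclic
    · exact ⟨G, le_refl _, hG, hac⟩
    · rw [isAcyclic_iff_forall_adj_isBridge] at hac
      push_neg at hac
      obtain ⟨v, w, hadj, hnb⟩ := hac
      rw [isBridge_iff] at hnb
      push_neg at hnb
      have hreach : (G \ fromEdgeSet {s(v, w)}).Reachable v w := hnb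
      set G' := G \ fromEdgeSet {s(v, w)} with hG'
      have hle : G' ≤ G := sdiff_le
      have hGedge : G'.edgeSet = G.edgeSet \ {s(v, w)} := by
        rw [hG', edgeSet_sdiff, edgeSet_fromEdgeSet, edgeSet_sdiff_sdiff_isDiag]
      -- G' is connected
      have hconn : G'.Connected := by
        rw [connected_iff]
        refine ⟨?_, hG.nonempty⟩
        intro a b
        obtain ⟨p⟩ := hG.preconnected a b
        clear hcard
        induction p with
        | nil => exact Reachable.refl _
        | @cons a c b h p ihp =>
          refine Reachable.trans ?_ ihp
          by_cases he : s(a, c) = s(v, w)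
          · rw [Sym2.eq_iff] at he
            rcases he with ⟨rfl, rfl⟩ | ⟨rfl, rfl⟩
            · exact hreach
            · exact hreach.symm
          · exact Adj.reachable (by
              rw [hG']
              exact ⟨h, by simp [he]⟩)
      have hmem : s(v, w) ∈ G.edgeSet := hadj
      have hlt : G'.edgeSet.ncard < G.edgeSet.ncard := by
        rw [hGedge]
        exact Set.ncard_diff_singleton_lt_of_mem hmem (Set.toFinite _)
      obtain ⟨T, hT1, hT2⟩ := ih G' (by omega) hconn
      exact ⟨T, le_trans hT1 hle, hT2⟩

lemma exists_spanning_tree (G : SimpleGraph V) (hG : G.Connected) :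
    ∃ T : SimpleGraph V, T ≤ G ∧ T.IsTree :=
  exists_spanning_tree_aux G.edgeSet.ncard G le_rfl hG


/-- the widely-spaced injective coloring -/
lemma backbone_set_nonempty [Nonempty V] (G H : SimpleGraph V) :
    ∃ k, ∃ c : V → ℕ, IsBackboneColoring G H 2 k c := by
  classical
  set n := Fintype.card V with hn
  have hn1 : 1 ≤ n := Fintype.card_pos
  refine ⟨2 * n, fun v => 2 * (Fintype.equivFin V v).val + 1, ⟨⟨?_, ?_⟩, ?_⟩⟩
  · intro v
    dsimp only
    have := (Fintype.equivFin V v).isLt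
    omega
  · intro u v huv
    have hne : u ≠ v := huv.ne
    have : (Fintype.equivFin V u).val ≠ (Fintype.equivFin V v).val := by
      intro h
      exact hne ((Fintype.equivFin V).injective (Fin.ext h))
    dsimp only
    omega
  · intro u v huv
    dsimp only
    have hne : u ≠ v := huv.ne
    have h : (Fintype.equivFin V u).val ≠ (Fintype.equivFin V v).val := by
      intro h
      exact hne ((Fintype.equivFin V).injective (Fin.ext h))
    have : ((2 * (Fintype.equivFin V u).val + 1 : ℕ) : ℤ) -
        ((2 * (Fintype.equivFin V v).val + 1 : ℕ) : ℤ) =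
        2 * (((Fintype.equivFin V u).val : ℤ) - (Fintype.equivFin V v).val) := by
      push_cast; ring
    have h2 : (((2:ℕ)):ℤ) = 2 := by norm_num
    rw [h2, this, abs_mul]
    have h1 : (1 : ℤ) ≤ |((Fintype.equivFin V u).val : ℤ) - (Fintype.equivFin V v).val| := by
      refine Int.one_le_abs (sub_ne_zero.mpr ?_)
      exact_mod_cast h
    simp only [abs_two] -- |2| = 2
    nlinarith

lemma proper_set_nonempty [Nonempty V] (G : SimpleGraph V) :
    {k : ℕ | ∃ c : V → ℕ, IsProperColoring G k c}.Nonempty := by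
  obtain ⟨k, c, hc⟩ := backbone_set_nonempty G G
  exact ⟨k, c, hc.1⟩

lemma chromNum_mem [Nonempty V] (G : SimpleGraph V) :
    ∃ c : V → ℕ, IsProperColoring G (chromNum G) c :=
  Nat.sInf_mem (proper_set_nonempty G)

lemma chromNum_le_BBC [Nonempty V] (G H : SimpleGraph V) :
    chromNum G ≤ BBC G H 2 := by
  have hne : {k : ℕ | ∃ c : V → ℕ, IsBackboneColoring G H 2 k c}.Nonempty :=
    backbone_set_nonempty G H
  obtain ⟨c, hc⟩ := Nat.sInf_mem hne
  exact Nat.sInf_le ⟨c, hc.1⟩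

/-- the "gap at least 2" subgraph of `G` relative to a coloring `c` -/
def Gs (G : SimpleGraph V) (c : V → ℕ) : SimpleGraph V where
  Adj u v := G.Adj u v ∧ 2 ≤ |(c u : ℤ) - (c v : ℤ)|
  symm := ⟨by
    intro u v ⟨h1, h2⟩
    exact ⟨h1.symm, by rwa [abs_sub_comm]⟩⟩
  loopless := ⟨fun v h => G.loopless.irrefl v h.1⟩

lemma Gs_le (G : SimpleGraph V) (c : V → ℕ) : Gs G c ≤ G := fun _ _ h => h.1

/-- size of the largest connected component of `Gs G c` -/
noncomputable def Mpot (G : SimpleGraph V) (c : V → ℕ) : ℕ :=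
  Finset.univ.sup fun v => {w | (Gs G c).Reachable v w}.ncard

lemma Mpot_le_card (G : SimpleGraph V) (c : V → ℕ) : Mpot G c ≤ Fintype.card V := by
  refine Finset.sup_le fun v _ => ?_
  refine le_trans (Set.ncard_le_ncard (Set.subset_univ _) (Set.toFinite _)) ?_
  rw [Set.ncard_univ]
  exact le_of_eq Nat.card_eq_fintype_card

lemma exists_cross_walk (G : SimpleGraph V) (A : Set V) :
    ∀ {u w : V}, G.Walk u w → u ∈ A → w ∉ A →
      ∃ x y, x ∈ A ∧ y ∉ A ∧ G.Adj x y := by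
  intro u w p
  induction p with
  | nil => intro hu hw; exact absurd hu hw
  | @cons a b w h q ih =>
    intro hu hw
    by_cases hb : b ∈ A
    · exact ih hb hw
    · exact ⟨a, b, hu, hb, h⟩


lemma improve_of_swap (G : SimpleGraph V) {k : ℕ} {c : V → ℕ}
    (hc : IsProperColoring G k c) (A : Set V)
    (s t : ℕ) (hs1 : 1 ≤ s) (hsk : s ≤ k) (ht1 : 1 ≤ t) (htk : t ≤ k)
    (hvalid : ∀ ⦃x y : V⦄, x ∈ A → y ∉ A → G.Adj x y → Equiv.swap s t (c y) ≠ c x)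
    {x0 y0 : V} (hx0 : x0 ∈ A) (hy0 : y0 ∉ A) (hadj0 : G.Adj x0 y0)
    (himp : 2 ≤ |((Equiv.swap s t (c y0) : ℕ) : ℤ) - (c x0 : ℤ)|) :
    ∃ c' : V → ℕ, IsProperColoring G k c' ∧ (∀ a ∈ A, c' a = c a) ∧
      ∃ x0 y0, x0 ∈ A ∧ y0 ∉ A ∧ G.Adj x0 y0 ∧ 2 ≤ |(c' y0 : ℤ) - (c' x0 : ℤ)| := by
  classical
  set c' : V → ℕ := fun z => if z ∈ A then c z else Equiv.swap s t (c z) with hc'def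
  have hagree : ∀ a ∈ A, c' a = c a := fun a ha => if_pos ha
  have hout : ∀ a, a ∉ A → c' a = Equiv.swap s t (c a) := fun a ha => if_neg ha
  have hswap_bounds : ∀ m : ℕ, 1 ≤ m → m ≤ k → 1 ≤ Equiv.swap s t m ∧ Equiv.swap s t m ≤ k := by
    intro m h1 h2
    rw [Equiv.swap_apply_def]
    split_ifs <;> omega
  refine ⟨c', ⟨?_, ?_⟩, hagree, x0, y0, hx0, hy0, hadj0, ?_⟩
  · intro v
    by_cases hv : v ∈ A
    · rw [hagree v hv]; exact hc.1 v
    · rw [hout v hv]; exact hswap_bounds (c v) (hc.1 v).1 (hc.1 v).2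
  · intro u v huv
    by_cases hu : u ∈ A <;> by_cases hv : v ∈ A
    · rw [hagree u hu, hagree v hv]; exact hc.2 huv
    · rw [hagree u hu, hout v hv]; exact (hvalid hu hv huv).symm
    · rw [hout u hu, hagree v hv]; exact hvalid hv hu huv.symm
    · rw [hout u hu, hout v hv]
      exact fun h => hc.2 huv ((Equiv.swap s t).injective h)
  · rw [hagree x0 hx0, hout y0 hy0]
    exact himp

lemma improve (G : SimpleGraph V) {k : ℕ} (hk : 4 ≤ k) {c : V → ℕ}
    (hc : IsProperColoring G k c) (A : Set V)
    (hA : ∀ ⦃x y : V⦄, x ∈ A → (Gs G c).Adj x y → y ∈ A)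
    {x1 y1 : V} (hx1 : x1 ∈ A) (hy1 : y1 ∉ A) (hadj1 : G.Adj x1 y1) :
    ∃ c' : V → ℕ, IsProperColoring G k c' ∧ (∀ a ∈ A, c' a = c a) ∧
      ∃ x0 y0, x0 ∈ A ∧ y0 ∉ A ∧ G.Adj x0 y0 ∧ 2 ≤ |(c' y0 : ℤ) - (c' x0 : ℤ)| := by
  classical
  -- every cross edge has color difference exactly one
  have hcross : ∀ ⦃x y : V⦄, x ∈ A → y ∉ A → G.Adj x y →
      c x = c y + 1 ∨ c y = c x + 1 := by
    intro x y hx hy hxy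
    have hnadj : ¬ (Gs G c).Adj x y := fun h => hy (hA hx h)
    have h2 : ¬ (2 ≤ |(c x : ℤ) - (c y : ℤ)|) := fun h2 => hnadj ⟨hxy, h2⟩
    rw [not_le, abs_lt] at h2
    have hne := hc.2 hxy
    omega
  by_cases h1 : ∃ x y, x ∈ A ∧ y ∉ A ∧ G.Adj x y ∧ 3 ≤ c y ∧ c x = c y + 1
  · obtain ⟨x0, y0, hx0, hy0, hadj0, ha3, hcx⟩ := h1
    set a := c y0 with hadef
    refine improve_of_swap G hc A (a - 2) a (by omega) (by have := (hc.1 y0).2; omega) (by omega)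
      ((hc.1 y0).2) ?_ hx0 hy0 hadj0 ?_
    · intro x y hx hy hxy
      have hd := hcross hx hy hxy
      by_cases e1 : c y = a - 2
      · rw [e1, Equiv.swap_apply_left]; omega
      · by_cases e2 : c y = a
        · rw [e2, Equiv.swap_apply_right]; omega
        · rw [Equiv.swap_apply_of_ne_of_ne e1 e2]; omega
    · have h5 : Equiv.swap (a - 2) a (c y0) = a - 2 := by
        rw [← hadef, Equiv.swap_apply_right]
      rw [h5, hcx]
      have : ((a - 2 : ℕ) : ℤ) - ((a + 1 : ℕ) : ℤ) = -3 := by omega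
      rw [this]
      norm_num
  by_cases h2 : ∃ x y, x ∈ A ∧ y ∉ A ∧ G.Adj x y ∧ c x + 3 ≤ k ∧ c y = c x + 1
  · obtain ⟨x0, y0, hx0, hy0, hadj0, hk3, hcy⟩ := h2
    set d := c x0 with hddef
    have hd1 : 1 ≤ d := (hc.1 x0).1
    refine improve_of_swap G hc A (d + 1) (d + 3) (by omega) (by omega) (by omega)
      (by omega) ?_ hx0 hy0 hadj0 ?_
    · intro x y hx hy hxy
      have hd := hcross hx hy hxy
      by_cases e1 : c y = d + 1
      · rw [e1, Equiv.swap_apply_left]; omega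
      · by_cases e2 : c y = d + 3
        · rw [e2, Equiv.swap_apply_right]; omega
        · rw [Equiv.swap_apply_of_ne_of_ne e1 e2]; omega
    · have h5 : Equiv.swap (d + 1) (d + 3) (c y0) = d + 3 := by
        rw [hcy]; exact Equiv.swap_apply_left _ _
      rw [h5, ← hddef]
      have : ((d + 3 : ℕ) : ℤ) - (d : ℤ) = 3 := by omega
      rw [this]
      norm_num
  by_cases h3 : ∃ x y, x ∈ A ∧ y ∉ A ∧ G.Adj x y ∧ c y = 1 ∧ c x = 2
  · obtain ⟨x0, y0, hx0, hy0, hadj0, hcy, hcx⟩ := h3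
    refine improve_of_swap G hc A 1 k (by omega) (by omega) (by omega) (by omega)
      ?_ hx0 hy0 hadj0 ?_
    · intro x y hx hy hxy
      have hd := hcross hx hy hxy
      have hbx := hc.1 x
      have hby := hc.1 y
      by_cases e1 : c y = 1
      · rw [e1, Equiv.swap_apply_left]; omega
      · by_cases e2 : c y = k
        · rw [e2, Equiv.swap_apply_right]; omega
        · rw [Equiv.swap_apply_of_ne_of_ne e1 e2]; omega
    · have h5 : Equiv.swap 1 k (c y0) = k := by rw [hcy, Equiv.swap_apply_left]
      rw [h5, hcx]
      have h6 : (2 : ℤ) ≤ (k : ℤ) - ((2 : ℕ) : ℤ) := by omega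
      calc (2:ℤ) ≤ (k : ℤ) - ((2:ℕ) : ℤ) := h6
        _ ≤ |(k : ℤ) - ((2:ℕ) : ℤ)| := le_abs_self _
  by_cases h4 : ∃ x y, x ∈ A ∧ y ∉ A ∧ G.Adj x y ∧ c y = k ∧ c x + 1 = k
  · obtain ⟨x0, y0, hx0, hy0, hadj0, hcy, hcx⟩ := h4
    refine improve_of_swap G hc A 1 k (by omega) (by omega) (by omega) (by omega)
      ?_ hx0 hy0 hadj0 ?_
    · intro x y hx hy hxy
      have hd := hcross hx hy hxy
      have hbx := hc.1 x
      have hby := hc.1 y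
      by_cases e1 : c y = 1
      · rw [e1, Equiv.swap_apply_left]; omega
      · by_cases e2 : c y = k
        · rw [e2, Equiv.swap_apply_right]; omega
        · rw [Equiv.swap_apply_of_ne_of_ne e1 e2]; omega
    · have h5 : Equiv.swap 1 k (c y0) = 1 := by rw [hcy, Equiv.swap_apply_right]
      rw [h5]
      have : ((1 : ℕ) : ℤ) - (c x0 : ℤ) ≤ -2 := by omega
      have habs : 2 ≤ |((1 : ℕ) : ℤ) - (c x0 : ℤ)| := by
        rw [abs_sub_comm]
        calc (2:ℤ) ≤ (c x0 : ℤ) - ((1:ℕ) : ℤ) := by omega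
          _ ≤ |(c x0 : ℤ) - ((1:ℕ) : ℤ)| := le_abs_self _
      exact habs
  by_cases h5 : ∃ x y, x ∈ A ∧ y ∉ A ∧ G.Adj x y ∧ c y = 2 ∧ c x = 3
  · obtain ⟨x0, y0, hx0, hy0, hadj0, hcy, hcx⟩ := h5
    refine improve_of_swap G hc A 1 2 (by omega) (by omega) (by omega) (by omega)
      ?_ hx0 hy0 hadj0 ?_
    · intro x y hx hy hxy
      have hd := hcross hx hy hxy
      have hbx := hc.1 x
      have hby := hc.1 y
      by_cases e1 : c y = 1
      · -- then c x = 2 (since c x = 0 impossible), contradicting ¬h3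
        exfalso
        exact h3 ⟨x, y, hx, hy, hxy, e1, by omega⟩
      · by_cases e2 : c y = 2
        · -- c x ∈ {1, 3}; c x = 1 contradicts ¬h2 (1+3 ≤ k); so c x = 3 ≠ 1
          rw [e2, Equiv.swap_apply_right]
          intro hcontra
          exact h2 ⟨x, y, hx, hy, hxy, by omega, by omega⟩
        · rw [Equiv.swap_apply_of_ne_of_ne e1 e2]; omega
    · have hsw : Equiv.swap 1 2 (c y0) = 1 := by rw [hcy, Equiv.swap_apply_right]
      rw [hsw, hcx]
      have : ((1 : ℕ) : ℤ) - ((3 : ℕ) : ℤ) = -2 := by omega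
      rw [this]
      norm_num
  by_cases h6 : ∃ x y, x ∈ A ∧ y ∉ A ∧ G.Adj x y ∧ c y + 1 = k ∧ c x + 2 = k
  · obtain ⟨x0, y0, hx0, hy0, hadj0, hcy, hcx⟩ := h6
    refine improve_of_swap G hc A (k - 1) k (by omega) (by omega) (by omega) (by omega)
      ?_ hx0 hy0 hadj0 ?_
    · intro x y hx hy hxy
      have hd := hcross hx hy hxy
      have hbx := hc.1 x
      have hby := hc.1 y
      by_cases e1 : c y = k - 1
      · -- maps to k; c x ∈ {k-2, k}; c x = k contradicts ¬h1 (c y = k-1 ≥ 3)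
        rw [e1, Equiv.swap_apply_left]
        intro hcontra
        exact h1 ⟨x, y, hx, hy, hxy, by omega, by omega⟩
      · by_cases e2 : c y = k
        · -- maps to k-1; c x = k-1 contradicts ¬h4; c x = k+1 impossible
          rw [e2, Equiv.swap_apply_right]
          intro hcontra
          exact h4 ⟨x, y, hx, hy, hxy, e2, by omega⟩
        · rw [Equiv.swap_apply_of_ne_of_ne e1 e2]; omega
    · have hsw : Equiv.swap (k - 1) k (c y0) = k := by
        rw [show c y0 = k - 1 by omega, Equiv.swap_apply_left]
      rw [hsw]
      have : (k : ℤ) - (c x0 : ℤ) = 2 := by omega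
      rw [this]
      norm_num
  -- exhaustiveness: derive a contradiction
  exfalso
  have hd := hcross hx1 hy1 hadj1
  have hbx := hc.1 x1
  have hby := hc.1 y1
  rcases hd with hd | hd
  · -- c x1 = c y1 + 1
    rcases Nat.lt_or_ge (c y1) 3 with hlt | hge
    · have he : c y1 = 1 ∨ c y1 = 2 := by omega
      rcases he with e | e
      · exact h3 ⟨x1, y1, hx1, hy1, hadj1, e, by omega⟩
      · exact h5 ⟨x1, y1, hx1, hy1, hadj1, e, by omega⟩
    · exact h1 ⟨x1, y1, hx1, hy1, hadj1, hge, hd⟩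
  · -- c y1 = c x1 + 1
    rcases Nat.lt_or_ge (c x1 + 3) (k + 1) with hlt | hge
    · exact h2 ⟨x1, y1, hx1, hy1, hadj1, by omega, hd⟩
    · -- c x1 ≥ k - 2, and c y1 = c x1 + 1 ≤ k, so c x1 ∈ {k-2, k-1}
      rcases Nat.lt_or_ge (c x1) (k - 1) with h' | h'
      · exact h6 ⟨x1, y1, hx1, hy1, hadj1, by omega, by omega⟩
      · exact h4 ⟨x1, y1, hx1, hy1, hadj1, by omega, by omega⟩

lemma exists_good_coloring (G : SimpleGraph V) (hG : G.Connected)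
    (hk : 4 ≤ chromNum G) :
    ∃ c, IsProperColoring G (chromNum G) c ∧ (Gs G c).Connected := by
  classical
  haveI : Nonempty V := hG.nonempty
  set k := chromNum G with hkdef
  set S := {c : V → ℕ | IsProperColoring G k c} with hS
  have hSne : S.Nonempty := chromNum_mem G
  have hbdd : BddAbove ((fun c => Mpot G c) '' S) := by
    refine ⟨Fintype.card V, ?_⟩
    rintro x ⟨c, _, rfl⟩
    exact Mpot_le_card G c
  obtain ⟨c, hcS, hcmax⟩ : ∃ c ∈ S, ∀ c' ∈ S, Mpot G c' ≤ Mpot G c := by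
    obtain ⟨c, hcS, hceq⟩ := Nat.sSup_mem (hSne.image _) hbdd
    refine ⟨c, hcS, fun c' h' => ?_⟩
    have h1 : Mpot G c' ≤ sSup ((fun c => Mpot G c) '' S) := le_csSup hbdd ⟨c', h', rfl⟩
    have h2 : Mpot G c = sSup ((fun c => Mpot G c) '' S) := hceq
    omega
  obtain ⟨v0, -, hv0⟩ :=
    Finset.exists_mem_eq_sup Finset.univ Finset.univ_nonempty
      (fun v => {w | (Gs G c).Reachable v w}.ncard)
  set A := {w : V | (Gs G c).Reachable v0 w} with hAdef
  have hA : ∀ ⦃x y : V⦄, x ∈ A → (Gs G c).Adj x y → y ∈ A :=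
    fun x y hx h => Reachable.trans hx h.reachable
  have hAuniv : ∀ w, w ∈ A := by
    by_contra hcon
    push_neg at hcon
    obtain ⟨w, hw⟩ := hcon
    obtain ⟨x1, y1, hx1, hy1, hadj⟩ :=
      (hG.preconnected v0 w).elim fun p =>
        exists_cross_walk G A p (Reachable.refl v0) hw
    obtain ⟨c', hc', hagree, x0, y0, hx0, hy0, hadj0, himp⟩ :=
      improve G hk hcS A hA hx1 hy1 hadj
    have hlift : ∀ {u z : V}, (Gs G c).Walk u z → u ∈ A → (Gs G c').Reachable u z := by
      intro u z p
      induction p with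
      | nil => intro _; exact Reachable.refl _
      | @cons a b z h q ih =>
        intro ha
        have hb : b ∈ A := hA ha h
        have hadj' : (Gs G c').Adj a b := by
          refine ⟨h.1, ?_⟩
          rw [hagree a ha, hagree b hb]
          exact h.2
        exact hadj'.reachable.trans (ih hb)
    have hliftA : ∀ z ∈ A, (Gs G c').Reachable v0 z := by
      intro z hz
      exact hz.elim fun p => hlift p (Reachable.refl v0)
    have hsub : insert y0 A ⊆ {w | (Gs G c').Reachable x0 w} := by
      intro z hz
      rcases Set.mem_insert_iff.mp hz with rfl | hz
      · exact Adj.reachable ⟨hadj0, by rw [abs_sub_comm]; exact himp⟩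
      · exact (hliftA x0 hx0).symm.trans (hliftA z hz)
    have hlt : Mpot G c < Mpot G c' := by
      have h1 : {w | (Gs G c').Reachable x0 w}.ncard ≤ Mpot G c' := by
        unfold Mpot
        exact Finset.le_sup (f := fun v => {w | (Gs G c').Reachable v w}.ncard) (Finset.mem_univ x0)
      have h2 : {w | (Gs G c').Reachable x0 w}.ncard ≥ (insert y0 A).ncard :=
        Set.ncard_le_ncard hsub (Set.toFinite _)
      have h3 : (insert y0 A).ncard = A.ncard + 1 :=
        Set.ncard_insert_of_notMem hy0 (Set.toFinite A)
      have h4 : Mpot G c = A.ncard := by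
        unfold Mpot
        rw [hv0]
      omega
    exact absurd (hcmax c' hc') (not_le.mpr hlt)
  refine ⟨c, hcS, (connected_iff _).mpr ⟨fun u v => ((hAuniv u).symm.trans (hAuniv v)), hG.nonempty⟩⟩



end Aux

/-- Every connected graph `G` with `χ(G) ≥ 4` has a spanning tree `T` with
`BBC_2(G,T) = χ(G)`, and every spanning tree `T'` of `G` satisfies
`BBC_2(G,T') ≥ χ(G)`. -/
theorem stmt_7 {V : Type*} [Fintype V] (G : SimpleGraph V) (hG : G.Connected)
    (hchi : 4 ≤ chromNum G) :
    (∃ T : SimpleGraph V, T ≤ G ∧ T.IsTree ∧ BBC G T 2 = chromNum G) ∧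
    (∀ T' : SimpleGraph V, T' ≤ G → T'.IsTree → chromNum G ≤ BBC G T' 2) := by
  classical
  haveI : Nonempty V := hG.nonempty
  have hpart2 : ∀ T' : SimpleGraph V, T' ≤ G → T'.IsTree → chromNum G ≤ BBC G T' 2 :=
    fun T' _ _ => chromNum_le_BBC G T'
  refine ⟨?_, hpart2⟩
  obtain ⟨c, hc, hconn⟩ := exists_good_coloring G hG hchi
  obtain ⟨T, hTle, hTtree⟩ := exists_spanning_tree (Gs G c) hconn
  have hTG : T ≤ G := le_trans hTle (Gs_le G c)
  refine ⟨T, hTG, hTtree, ?_⟩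
  refine le_antisymm ?_ (hpart2 T hTG hTtree)
  apply Nat.sInf_le
  refine ⟨c, hc, ?_⟩
  intro u v huv
  have h2 := (hTle huv).2
  simpa using h2
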